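/- Let A be a complex n×n matrix. The set 𝔹 = {x ∈ ℂ^n : the orbit {e^{tA}x : t ∈ ℝ} is bounded} equals the sum, over all purely imaginary eigenvalues λ of A (i.e. Re(λ) = 0), of the eigenspaces ker(A − λI). In particular 𝔹 is a linear subspace on which A acts diagonalizably with all eigenvalues of zero real part. -/

import Mathlib

/-- The linear flow of a complex matrix `A` on `ℂⁿ`: `t ↦ e^{tA}` acting on vectors. -/
noncomputable def linFlowC {n : ℕ} (A : Matrix (Fin n) (Fin n) ℂ) (t : ℝ) (x : Fin n → ℂ) :
    Fin n → ℂ :=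
  (NormedSpace.exp (t • A)).mulVec x

namespace BddOrbitAux

attribute [local instance] Matrix.linftyOpNormedRing Matrix.linftyOpNormedAlgebra

open NormedSpace Nat

lemma pow_mulVec_eigen {n : ℕ} (A : Matrix (Fin n) (Fin n) ℂ) (μ : ℂ) (x w : Fin n → ℂ)
    (hx : A.mulVec x = μ • x + w) (hw : A.mulVec w = μ • w) (k : ℕ) :
    (A ^ k).mulVec x = μ ^ k • x + ((k : ℂ) * μ ^ (k - 1)) • w := by
  induction k with
  | zero => simp
  | succ k ih =>
    have h1 : (A ^ (k + 1)).mulVec x = A.mulVec ((A ^ k).mulVec x) := by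
      rw [_root_.pow_succ', ← Matrix.mulVec_mulVec]
    rw [h1, ih, Matrix.mulVec_add, Matrix.mulVec_smul, Matrix.mulVec_smul, hx, hw]
    have hc : μ ^ k + (k : ℂ) * μ ^ (k - 1) * μ = ((k : ℂ) + 1) * μ ^ k := by
      cases k with
      | zero => simp
      | succ m =>
        have h2 : (m + 1 : ℕ) - 1 = m := rfl
        rw [h2]
        push_cast
        ring
    rw [smul_add, smul_smul, smul_smul, add_assoc, ← add_smul, ← _root_.pow_succ]
    congr 1
    congr 1
    rw [hc]
    push_cast [Nat.add_sub_cancel]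
    ring

lemma linFlowC_formula {n : ℕ} (A : Matrix (Fin n) (Fin n) ℂ) (μ : ℂ) (x w : Fin n → ℂ)
    (hx : A.mulVec x = μ • x + w) (hw : A.mulVec w = μ • w) (t : ℝ) :
    linFlowC A t x
      = Complex.exp (t * μ) • x + ((t : ℂ) * Complex.exp (t * μ)) • w := by
  classical
  set F : ℕ → ℂ := fun k => ((k ! : ℂ))⁻¹ * ((t : ℂ) * μ) ^ k with hF
  set G : ℕ → ℂ := fun k => ((k ! : ℂ))⁻¹ * (t : ℂ) ^ k * ((k : ℂ) * μ ^ (k - 1)) with hG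
  let L : Matrix (Fin n) (Fin n) ℂ →ₗ[ℝ] (Fin n → ℂ) :=
    { toFun := fun M => M.mulVec x
      map_add' := fun M N => Matrix.add_mulVec M N x
      map_smul' := fun r M => Matrix.smul_mulVec r M x }
  have hL : Continuous L := LinearMap.continuous_of_finiteDimensional L
  have hsum : HasSum (fun k : ℕ => L (((k ! : ℝ))⁻¹ • (t • A) ^ k)) (L (exp (t • A))) :=
    (exp_series_hasSum_exp' (𝕂 := ℝ) (t • A)).map L hL
  have hrsmul : ∀ (r : ℝ) (v : Fin n → ℂ), r • v = (r : ℂ) • v := fun r v =>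
    (algebraMap_smul ℂ r v).symm
  have hterm : ∀ k : ℕ, L (((k ! : ℝ))⁻¹ • (t • A) ^ k) = F k • x + G k • w := by
    intro k
    show (((k ! : ℝ))⁻¹ • (t • A) ^ k).mulVec x = _
    rw [smul_pow, Matrix.smul_mulVec, Matrix.smul_mulVec,
      pow_mulVec_eigen A μ x w hx hw k, hrsmul, hrsmul, hF, hG]
    push_cast
    rw [smul_add, smul_add, smul_smul, smul_smul, smul_smul, smul_smul]
    congr 1
    rw [mul_pow]
    ring_nf
  have hFsum : HasSum F (Complex.exp ((t : ℂ) * μ)) := by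
    have h := exp_series_hasSum_exp' (𝕂 := ℂ) ((t : ℂ) * μ)
    rw [← Complex.exp_eq_exp_ℂ] at h
    simpa [hF, smul_eq_mul] using h
  have hGkey : ∀ k : ℕ, G (k + 1) = (t : ℂ) * F k := by
    intro k
    have h1 : (((k + 1)! : ℕ) : ℂ) = ((k : ℂ) + 1) * ((k ! : ℕ) : ℂ) := by
      push_cast [Nat.factorial_succ]; ring
    have h2 : ((k : ℂ) + 1) ≠ 0 := Nat.cast_add_one_ne_zero k
    have h3 : (((k ! : ℕ)) : ℂ) ≠ 0 := Nat.cast_ne_zero.2 (Nat.factorial_ne_zero k)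
    have h4 : (k + 1) - 1 = k := rfl
    simp only [hG, hF, h4, h1]
    push_cast
    field_simp
    ring
  have hGsum : HasSum G ((t : ℂ) * Complex.exp ((t : ℂ) * μ)) := by
    have h := hFsum.mul_left (t : ℂ)
    have h' : HasSum (fun k : ℕ => G (k + 1)) ((t : ℂ) * Complex.exp ((t : ℂ) * μ)) := by
      simpa [hGkey] using h
    have h'' := (hasSum_nat_add_iff (f := G) 1).mp h'
    simpa [Finset.sum_range_one, hG] using h''
  have hRHS : HasSum (fun k : ℕ => F k • x + G k • w)
      (Complex.exp ((t : ℂ) * μ) • x + ((t : ℂ) * Complex.exp ((t : ℂ) * μ)) • w) :=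
    (hFsum.smul_const x).add (hGsum.smul_const w)
  have hLHS : HasSum (fun k : ℕ => F k • x + G k • w) (L (exp (t • A))) := by
    have he : (fun k : ℕ => L (((k ! : ℝ))⁻¹ • (t • A) ^ k))
        = fun k : ℕ => F k • x + G k • w := funext hterm
    rwa [he] at hsum
  have hfl : linFlowC A t x = L (exp (t • A)) := rfl
  rw [hfl]
  exact hLHS.unique hRHS

lemma linFlowC_eigenvec {n : ℕ} (A : Matrix (Fin n) (Fin n) ℂ) (μ : ℂ) (v : Fin n → ℂ)
    (hv : A.mulVec v = μ • v) (t : ℝ) :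
    linFlowC A t v = Complex.exp (t * μ) • v := by
  have h := linFlowC_formula A μ v 0 (by simpa using hv) (by simp [Matrix.mulVec_zero]) t
  simpa using h

lemma norm_linFlowC_eigenvec {n : ℕ} (A : Matrix (Fin n) (Fin n) ℂ) (μ : ℂ) (v : Fin n → ℂ)
    (hv : A.mulVec v = μ • v) (t : ℝ) :
    ‖linFlowC A t v‖ = Real.exp (t * μ.re) * ‖v‖ := by
  rw [linFlowC_eigenvec A μ v hv t, norm_smul]
  congr 1
  rw [Complex.norm_exp]
  congr 1
  simp [Complex.mul_re]

/-- The set of points with bounded orbit, as a submodule. -/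
noncomputable def bddOrbit {n : ℕ} (A : Matrix (Fin n) (Fin n) ℂ) : Submodule ℂ (Fin n → ℂ) where
  carrier := {x | ∃ C : ℝ, ∀ t : ℝ, ‖linFlowC A t x‖ ≤ C}
  add_mem' := by
    rintro x y ⟨C, hC⟩ ⟨D, hD⟩
    refine ⟨C + D, fun t => ?_⟩
    have h : linFlowC A t (x + y) = linFlowC A t x + linFlowC A t y :=
      Matrix.mulVec_add _ _ _
    rw [h]
    exact (norm_add_le _ _).trans (add_le_add (hC t) (hD t))
  zero_mem' := ⟨0, fun t => by simp [linFlowC, Matrix.mulVec_zero]⟩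
  smul_mem' := by
    rintro c x ⟨C, hC⟩
    refine ⟨‖c‖ * C, fun t => ?_⟩
    have h : linFlowC A t (c • x) = c • linFlowC A t x := Matrix.mulVec_smul _ _ _
    rw [h, norm_smul]
    exact mul_le_mul_of_nonneg_left (hC t) (norm_nonneg c)

lemma mem_bddOrbit {n : ℕ} (A : Matrix (Fin n) (Fin n) ℂ) (x : Fin n → ℂ) :
    x ∈ bddOrbit A ↔ ∃ C : ℝ, ∀ t : ℝ, ‖linFlowC A t x‖ ≤ C := Iff.rfl

lemma bddOrbit_invariant {n : ℕ} (A : Matrix (Fin n) (Fin n) ℂ) :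
    ∀ x ∈ bddOrbit A, Matrix.toLin' A x ∈ bddOrbit A := by
  intro x hx
  obtain ⟨C, hC⟩ := (mem_bddOrbit A x).mp hx
  let g := LinearMap.toContinuousLinearMap (Matrix.mulVecLin A)
  refine (mem_bddOrbit A _).mpr ⟨‖g‖ * C, fun t => ?_⟩
  have hcomm : NormedSpace.exp (t • A) * A = A * NormedSpace.exp (t • A) :=
    (((Commute.refl A).smul_left t).exp_left).eq
  have h : linFlowC A t (Matrix.toLin' A x) = A.mulVec (linFlowC A t x) := by
    rw [Matrix.toLin'_apply, linFlowC, linFlowC, Matrix.mulVec_mulVec, Matrix.mulVec_mulVec,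
      hcomm]
  rw [h]
  have h2 : A.mulVec (linFlowC A t x) = g (linFlowC A t x) := by
    simp [g, Matrix.mulVecLin_apply]
  rw [h2]
  calc ‖g (linFlowC A t x)‖ ≤ ‖g‖ * ‖linFlowC A t x‖ := g.le_opNorm _
    _ ≤ ‖g‖ * C := mul_le_mul_of_nonneg_left (hC t) (norm_nonneg g)

lemma mulVec_eq_of_bdd {n : ℕ} (A : Matrix (Fin n) (Fin n) ℂ) (μ : ℂ) :
    ∀ (k : ℕ) (x : Fin n → ℂ), x ∈ bddOrbit A →
      ((Matrix.toLin' A - μ • 1) ^ k) x = 0 → A.mulVec x = μ • x := by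
  intro k
  induction k with
  | zero =>
    intro x _ h
    simp only [pow_zero, Module.End.one_apply] at h
    simp [h, Matrix.mulVec_zero]
  | succ k ih =>
    intro x hxB hk
    set y := A.mulVec x - μ • x with hy
    have hyB : y ∈ bddOrbit A := by
      have h1 : Matrix.toLin' A x ∈ bddOrbit A := bddOrbit_invariant A x hxB
      rw [Matrix.toLin'_apply] at h1
      exact sub_mem h1 (Submodule.smul_mem _ μ hxB)
    have hky : ((Matrix.toLin' A - μ • 1) ^ k) y = 0 := by
      have h1 : ((Matrix.toLin' A - μ • 1) ^ (k + 1)) x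
          = ((Matrix.toLin' A - μ • 1) ^ k) ((Matrix.toLin' A - μ • 1) x) := by
        rw [_root_.pow_succ, Module.End.mul_apply]
      have h2 : (Matrix.toLin' A - μ • 1) x = y := by
        simp [hy, Matrix.toLin'_apply]
      rw [h1, h2] at hk
      exact hk
    have hAy : A.mulVec y = μ • y := ih y hyB hky
    by_cases hy0 : y = 0
    · rw [hy] at hy0
      rw [sub_eq_zero] at hy0
      exact hy0
    · exfalso
      obtain ⟨C, hC⟩ := (mem_bddOrbit A x).mp hxB
      have hC0 : 0 ≤ C := le_trans (norm_nonneg _) (hC 0)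
      have hxw : A.mulVec x = μ • x + y := by rw [hy]; abel
      have hyn : 0 < ‖y‖ := norm_pos_iff.mpr hy0
      set T : ℝ := (C + ‖x‖) / ‖y‖ + 1 with hT
      have hT0 : 0 < T := by positivity
      set t : ℝ := if 0 ≤ μ.re then T else -T with ht
      have htre : 0 ≤ t * μ.re := by
        rw [ht]
        split_ifs with h
        · positivity
        · push_neg at h
          have : 0 ≤ -μ.re := by linarith
          calc (0:ℝ) ≤ T * -μ.re := by positivity
            _ = -T * μ.re := by ring
      have habs : |t| = T := by
        rw [ht]
        split_ifs
        · exact abs_of_pos hT0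
        · rw [abs_neg]; exact abs_of_pos hT0
      have hE : 1 ≤ Real.exp (t * μ.re) := by
        calc (1:ℝ) ≤ t * μ.re + 1 := by linarith
          _ ≤ Real.exp (t * μ.re) := Real.add_one_le_exp _
      have hflow := linFlowC_formula A μ x y hxw hAy t
      have hbound := hC t
      rw [hflow] at hbound
      have h3 : ‖((t : ℂ) * Complex.exp (t * μ)) • y‖
          ≤ ‖Complex.exp (t * μ) • x + ((t : ℂ) * Complex.exp (t * μ)) • y‖
            + ‖Complex.exp (t * μ) • x‖ := by
        have := norm_le_add_norm_add (((t : ℂ) * Complex.exp (t * μ)) • y)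
          (Complex.exp (t * μ) • x)
        rwa [add_comm (((t : ℂ) * Complex.exp (t * μ)) • y)] at this
      have hex : ‖Complex.exp ((t : ℝ) * μ)‖ = Real.exp (t * μ.re) := by
        rw [Complex.norm_exp]
        congr 1
        simp [Complex.mul_re]
      have h4 : ‖Complex.exp (t * μ) • x‖ = Real.exp (t * μ.re) * ‖x‖ := by
        rw [norm_smul, hex]
      have h5 : ‖((t : ℂ) * Complex.exp (t * μ)) • y‖ = T * (Real.exp (t * μ.re) * ‖y‖) := by
        rw [norm_smul, norm_mul, hex, Complex.norm_real, Real.norm_eq_abs, habs]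
        ring
      have hTy : T * ‖y‖ = C + ‖x‖ + ‖y‖ := by
        rw [hT]
        field_simp
      have hxnn : (0:ℝ) ≤ ‖x‖ := norm_nonneg x
      nlinarith [h3, h4, h5, hbound, hE, hTy, hyn, hxnn]

lemma re_zero_of_bdd {n : ℕ} (A : Matrix (Fin n) (Fin n) ℂ) (μ : ℂ) (x : Fin n → ℂ)
    (hx0 : x ≠ 0) (hAx : A.mulVec x = μ • x) (hb : x ∈ bddOrbit A) : μ.re = 0 := by
  by_contra hre
  obtain ⟨C, hC⟩ := (mem_bddOrbit A x).mp hb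
  have hxn : 0 < ‖x‖ := norm_pos_iff.mpr hx0
  have hC0 : 0 ≤ C := le_trans (norm_nonneg _) (hC 0)
  set t : ℝ := (C / ‖x‖) / μ.re with ht
  have hbound := hC t
  rw [norm_linFlowC_eigenvec A μ x hAx t] at hbound
  have htr : t * μ.re = C / ‖x‖ := by
    rw [ht]; field_simp
  rw [htr] at hbound
  have h1 : C / ‖x‖ + 1 ≤ Real.exp (C / ‖x‖) := Real.add_one_le_exp _
  have h2 : (C / ‖x‖) * ‖x‖ = C := by field_simp
  nlinarith [hbound, h1, h2, hxn]

end BddOrbitAux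

open BddOrbitAux in
theorem boundedOrbit_eq_sup_imaginary_eigenspaces (n : ℕ) (A : Matrix (Fin n) (Fin n) ℂ) :
    {x : Fin n → ℂ | ∃ C : ℝ, ∀ t : ℝ, ‖linFlowC A t x‖ ≤ C}
      = ↑(⨆ μ ∈ {μ : ℂ | μ.re = 0}, Module.End.eigenspace (Matrix.toLin' A) μ) := by
  apply Set.eq_of_subset_of_subset
  · -- hard direction
    intro x hxset
    have hxB : x ∈ bddOrbit A := hxset
    have hinv : ∀ v ∈ bddOrbit A, Matrix.toLin' A v ∈ bddOrbit A := bddOrbit_invariant A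
    set g : Module.End ℂ (bddOrbit A) := LinearMap.restrict (Matrix.toLin' A) hinv with hg
    have htop : (⨆ μ : ℂ, Module.End.maxGenEigenspace g μ) = ⊤ :=
      Module.End.iSup_maxGenEigenspace_eq_top g
    have hmem : (⟨x, hxB⟩ : bddOrbit A) ∈ ⨆ μ : ℂ, Module.End.maxGenEigenspace g μ := by
      rw [htop]; trivial
    have hrest : ∀ (μ : ℂ) (k : ℕ) (y : bddOrbit A),
        ((Matrix.toLin' A - μ • 1) ^ k) (y : Fin n → ℂ)
          = ((((g - μ • 1) ^ k) y : bddOrbit A) : Fin n → ℂ) := by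
      intro μ k
      induction k with
      | zero => intro y; simp
      | succ k ih =>
        intro y
        have hz : ∀ z : bddOrbit A,
            ((((g - μ • 1) z : bddOrbit A)) : Fin n → ℂ)
              = (Matrix.toLin' A - μ • 1) (z : Fin n → ℂ) := by
          intro z
          simp [hg, LinearMap.restrict_apply]
        rw [_root_.pow_succ', _root_.pow_succ', Module.End.mul_apply, Module.End.mul_apply,
          hz, ← ih]
    have hfinal : ((⟨x, hxB⟩ : bddOrbit A) : Fin n → ℂ)
        ∈ ⨆ μ ∈ {μ : ℂ | μ.re = 0}, Module.End.eigenspace (Matrix.toLin' A) μ := by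
      refine Submodule.iSup_induction (motive := fun (v : bddOrbit A) =>
        (v : Fin n → ℂ) ∈ ⨆ μ ∈ {μ : ℂ | μ.re = 0},
          Module.End.eigenspace (Matrix.toLin' A) μ)
        (fun μ : ℂ => Module.End.maxGenEigenspace g μ) hmem ?_ ?_ ?_
      · intro μ y hy
        obtain ⟨k, hk⟩ := (Module.End.mem_maxGenEigenspace g μ y).mp hy
        have hk' : ((Matrix.toLin' A - μ • 1) ^ k) (y : Fin n → ℂ) = 0 := by
          rw [hrest μ k y, hk]
          rfl
        have hAy : A.mulVec (y : Fin n → ℂ) = μ • (y : Fin n → ℂ) :=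
          mulVec_eq_of_bdd A μ k (y : Fin n → ℂ) y.2 hk'
        by_cases hy0 : (y : Fin n → ℂ) = 0
        · rw [hy0]; exact Submodule.zero_mem _
        · have hre : μ.re = 0 := re_zero_of_bdd A μ (y : Fin n → ℂ) hy0 hAy y.2
          have hmem2 : (y : Fin n → ℂ) ∈ Module.End.eigenspace (Matrix.toLin' A) μ := by
            rw [Module.End.mem_eigenspace_iff, Matrix.toLin'_apply]
            exact hAy
          exact Submodule.mem_iSup_of_mem μ (Submodule.mem_iSup_of_mem hre hmem2)
      · simp
      · intro a b ha hb
        simpa using Submodule.add_mem _ ha hb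
    exact hfinal
  · -- easy direction
    intro x hx
    simp only [SetLike.mem_coe] at hx
    simp only [Set.mem_setOf_eq]
    refine Submodule.iSup_induction
      (motive := fun v : Fin n → ℂ => ∃ C : ℝ, ∀ t : ℝ, ‖linFlowC A t v‖ ≤ C)
      (fun μ : ℂ => ⨆ _ : μ ∈ {μ : ℂ | μ.re = 0},
        Module.End.eigenspace (Matrix.toLin' A) μ) hx ?_ ?_ ?_
    · intro μ v hv
      replace hv : v ∈ ⨆ _ : μ ∈ {μ : ℂ | μ.re = 0},
          Module.End.eigenspace (Matrix.toLin' A) μ := hv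
      by_cases hμ : μ ∈ {μ : ℂ | μ.re = 0}
      · rw [iSup_pos hμ] at hv
        have hAv : A.mulVec v = μ • v := by
          rw [← Matrix.toLin'_apply]
          exact Module.End.mem_eigenspace_iff.mp hv
        refine ⟨‖v‖, fun t => ?_⟩
        rw [norm_linFlowC_eigenvec A μ v hAv t]
        have : μ.re = 0 := hμ
        rw [this]
        simp
      · rw [iSup_neg hμ] at hv
        have : v = 0 := (Submodule.mem_bot ℂ).mp hv
        exact ⟨0, fun t => by simp [this, linFlowC, Matrix.mulVec_zero]⟩
    · exact ⟨0, fun t => by simp [linFlowC, Matrix.mulVec_zero]⟩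
    · rintro a b ⟨C, hC⟩ ⟨D, hD⟩
      refine ⟨C + D, fun t => ?_⟩
      have h : linFlowC A t (a + b) = linFlowC A t a + linFlowC A t b :=
        Matrix.mulVec_add _ _ _
      rw [h]
      exact (norm_add_le _ _).trans (add_le_add (hC t) (hD t))
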